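/- Let G be a finite DAG and u, v ∈ V, S ⊆ V, z ∈ V with u, v ∉ S ∪ {z}. If u and v are d-separated given S but d-connected given S ∪ {z}, then neither u nor v is an element of Des[z] (the descendants of z together with z itself). -/

import Mathlib

open Relation

/-- Undirected adjacency induced by a directed edge relation. -/
def Adjacent {V : Type*} (E : V → V → Prop) (a b : V) : Prop := E a b ∨ E b a

/-- `x` is a collider on the path (vertex list) `p`: both neighboring edges point into `x`. -/
def IsCollider {V : Type*} (E : V → V → Prop) (p : List V) (x : V) : Prop :=
  ∃ l1 a b l2, p = l1 ++ a :: x :: b :: l2 ∧ E a x ∧ E b x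

/-- A path (vertex list) is active given a conditioning set `C`:
every collider is in `C` or has a descendant in `C`, and no non-collider is in `C`. -/
def ActivePath {V : Type*} (E : V → V → Prop) (C : Set V) (p : List V) : Prop :=
  (∀ x ∈ p, IsCollider E p x → ∃ d, ReflTransGen E x d ∧ d ∈ C) ∧
  (∀ x ∈ p, ¬ IsCollider E p x → x ∉ C)

/-- `p` is a path between `u` and `v`: consecutively adjacent, distinct vertices. -/
def IsPathBetween {V : Type*} (E : V → V → Prop) (u v : V) (p : List V) : Prop :=
  p.Chain' (Adjacent E) ∧ p.Nodup ∧ p.head? = some u ∧ p.getLast? = some v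

/-- `u` and `v` are d-connected given `C`. -/
def DConn {V : Type*} (E : V → V → Prop) (C : Set V) (u v : V) : Prop :=
  ∃ p, IsPathBetween E u v p ∧ ActivePath E C p

/-- `u` and `v` are d-separated given `C`. -/
def DSep {V : Type*} (E : V → V → Prop) (C : Set V) (u v : V) : Prop :=
  ¬ DConn E C u v

/-- `S` is a prefix (ancestrally closed) subset. -/
def IsPrefixSet {V : Type*} (E : V → V → Prop) (S : Set V) : Prop :=
  ∀ u v, E u v → v ∈ S → u ∈ S

/-- Source vertices of the induced subgraph on `T`: vertices of `T` with no parent in `T`. -/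
def srcOf {V : Type*} (E : V → V → Prop) (T : Set V) : Set V :=
  {v | v ∈ T ∧ ∀ u, E u v → u ∉ T}

/-- The edge relation is acyclic. -/
def Acyclic {V : Type*} (E : V → V → Prop) : Prop :=
  ∀ v, ¬ TransGen E v v

/-- `p` is a directed path from `u` to `v` (all edges forward). -/
def DirPath {V : Type*} (E : V → V → Prop) (u v : V) (p : List V) : Prop :=
  p.Chain' E ∧ p.head? = some u ∧ p.getLast? = some v

section Aux

variable {V : Type*} {E : V → V → Prop}

lemma nodup_split_not_mem {s r : List V} {x : V} (h : (s ++ x :: r).Nodup) :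
    x ∉ s ∧ x ∉ r := by
  rw [List.nodup_append] at h
  exact ⟨fun hx => h.2.2 x hx x List.mem_cons_self rfl, (List.nodup_cons.1 h.2.1).1⟩

lemma eq_split {x : V} : ∀ (s : List V) {s' r r' : List V},
    s ++ x :: r = s' ++ x :: r' → x ∉ s → x ∉ s' → s = s' ∧ r = r' := by
  intro s
  induction s with
  | nil =>
    intro s' r r' h hx hx'
    cases s' with
    | nil => simpa using h
    | cons y s'' =>
      simp only [List.nil_append, List.cons_append, List.cons.injEq] at h
      exact (hx' (by rw [h.1]; exact List.mem_cons_self)).elim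
  | cons y s'' ih =>
    intro s' r r' h hx hx'
    cases s' with
    | nil =>
      simp only [List.cons_append, List.nil_append, List.cons.injEq] at h
      exact (hx (by rw [← h.1]; exact List.mem_cons_self)).elim
    | cons y' s3 =>
      simp only [List.cons_append, List.cons.injEq] at h
      obtain ⟨h1, h2⟩ := h
      obtain ⟨hs, hr⟩ := ih h2 (fun hm => hx (List.mem_cons_of_mem _ hm))
        (fun hm => hx' (List.mem_cons_of_mem _ hm))
      exact ⟨by rw [h1, hs], hr⟩

lemma exists_concat_of_getLast? {l : List V} {a : V} (h : l.getLast? = some a) :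
    ∃ l', l = l' ++ [a] := by
  cases l with
  | nil => simp at h
  | cons y l' =>
    have hne : (y :: l') ≠ [] := by simp
    have h2 : (y :: l').getLast hne = a := by
      rw [List.getLast?_eq_getLast hne] at h
      exact Option.some.inj h
    exact ⟨(y :: l').dropLast, by rw [← h2]; exact (List.dropLast_append_getLast hne).symm⟩

lemma collider_iff_decomp {p s r : List V} {x : V} (hnd : p.Nodup) (h : p = s ++ x :: r) :
    IsCollider E p x ↔ ∃ a b, s.getLast? = some a ∧ r.head? = some b ∧ E a x ∧ E b x := by
  constructor
  · rintro ⟨l1, a, b, l2, hp, hax, hbx⟩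
    have hp' : s ++ x :: r = (l1 ++ [a]) ++ x :: (b :: l2) := by
      rw [← h, hp]; simp
    have hnd1 : (s ++ x :: r).Nodup := h ▸ hnd
    have hxs := nodup_split_not_mem hnd1
    have hnd2 : ((l1 ++ [a]) ++ x :: (b :: l2)).Nodup := hp' ▸ hnd1
    have hx2 := nodup_split_not_mem hnd2
    obtain ⟨hs, hr⟩ := eq_split s hp' hxs.1 hx2.1
    exact ⟨a, b, by rw [hs]; exact List.getLast?_concat, by rw [hr]; rfl, hax, hbx⟩
  · rintro ⟨a, b, ha, hb, hax, hbx⟩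
    obtain ⟨s', hs'⟩ := exists_concat_of_getLast? ha
    have hr' : r = b :: r.tail := List.eq_cons_of_mem_head? hb
    exact ⟨s', a, b, r.tail, by rw [h, hs', hr']; simp, hax, hbx⟩

lemma chain'_cons_rtg : ∀ {l : List V} {b x : V},
    (b :: l).Chain' E → x ∈ b :: l → Relation.ReflTransGen E b x := by
  intro l
  induction l with
  | nil =>
    intro b x _ hx
    rw [List.mem_singleton] at hx
    subst hx; exact .refl
  | cons y l' ih =>
    intro b x hc hx
    rcases List.mem_cons.1 hx with h1 | h1
    · subst h1; exact .refl
    · exact .head (List.isChain_cons_cons.1 hc).1 (ih (List.isChain_cons_cons.1 hc).2 h1)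

lemma chain'_cons_tg : ∀ {l : List V} {b x : V},
    (b :: l).Chain' E → x ∈ l → Relation.TransGen E b x := by
  intro l
  induction l with
  | nil => intro b x _ hx; simp at hx
  | cons y l' ih =>
    intro b x hc hx
    rcases List.mem_cons.1 hx with h1 | h1
    · subst h1; exact .single (List.isChain_cons_cons.1 hc).1
    · exact .head (List.isChain_cons_cons.1 hc).1 (ih (List.isChain_cons_cons.1 hc).2 h1)

lemma chain'_nodup (hacyc : Acyclic E) : ∀ {l : List V}, l.Chain' E → l.Nodup := by
  intro l
  induction l with
  | nil => intro _; exact List.nodup_nil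
  | cons b l' ih =>
    intro hc
    exact List.nodup_cons.2 ⟨fun hb => hacyc b (chain'_cons_tg hc hb), ih hc.tail⟩

lemma rtg_exists_path {a b : V} (h : Relation.ReflTransGen E a b) :
    ∃ l : List V, l.Chain' E ∧ l.head? = some a ∧ l.getLast? = some b := by
  induction h with
  | refl => exact ⟨[a], List.isChain_singleton a, rfl, rfl⟩
  | @tail b' c hab' hb'c ih =>
    obtain ⟨l, hc, hh, hl⟩ := ih
    have hlne : l ≠ [] := by intro h0; rw [h0] at hh; simp at hh
    refine ⟨l ++ [c], ?_, ?_, List.getLast?_concat⟩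
    · refine List.IsChain.append hc (List.isChain_singleton c) ?_
      intro x hx y hy
      rw [hl] at hx
      simp only [Option.mem_def, Option.some.injEq] at hx hy
      rw [← hx]
      have hyc : c = y := by simpa using hy
      rw [← hyc]; exact hb'c
    · rw [List.head?_append_of_ne_nil _ hlne]; exact hh

lemma find_last {Q : V → Prop} : ∀ {l : List V}, (∃ x ∈ l, Q x) →
    ∃ l1 t l2, l = l1 ++ t :: l2 ∧ Q t ∧ ∀ x ∈ l2, ¬ Q x := by
  intro l
  induction l with
  | nil => rintro ⟨x, hx, -⟩; simp at hx
  | cons a l' ih =>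
    intro h
    by_cases h' : ∃ x ∈ l', Q x
    · obtain ⟨l1, t, l2, h1, h2, h3⟩ := ih h'
      exact ⟨a :: l1, t, l2, by rw [h1]; rfl, h2, h3⟩
    · obtain ⟨x, hx, hQ⟩ := h
      rcases List.mem_cons.1 hx with h1 | h1
      · exact ⟨[], a, l', rfl, h1 ▸ hQ, fun y hy hQy => h' ⟨y, hy, hQy⟩⟩
      · exact absurd ⟨x, h1, hQ⟩ h'

lemma isCollider_reverse_of {p : List V} {x : V} (h : IsCollider E p x) :
    IsCollider E p.reverse x := by
  obtain ⟨l1, a, b, l2, hp, hax, hbx⟩ := h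
  exact ⟨l2.reverse, b, a, l1.reverse, by rw [hp]; simp, hbx, hax⟩

lemma isCollider_reverse_iff {p : List V} {x : V} :
    IsCollider E p.reverse x ↔ IsCollider E p x :=
  ⟨fun h => by simpa using isCollider_reverse_of h, isCollider_reverse_of⟩

lemma DConn.symm' {C : Set V} {u v : V} (h : DConn E C u v) : DConn E C v u := by
  obtain ⟨p, ⟨hc, hn, hh, hl⟩, hcol, hnon⟩ := h
  refine ⟨p.reverse, ⟨?_, List.nodup_reverse.2 hn,
    by rw [List.head?_reverse]; exact hl, by rw [List.getLast?_reverse]; exact hh⟩, ?_, ?_⟩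
  · apply List.isChain_reverse.2
    exact List.IsChain.imp (fun a b hab => Or.symm hab) hc
  · intro x hx hcolx
    exact hcol x (List.mem_reverse.1 hx) (isCollider_reverse_iff.1 hcolx)
  · intro x hx hncol
    exact hnon x (List.mem_reverse.1 hx) (fun hc2 => hncol (isCollider_reverse_of hc2))

end Aux

lemma main_aux {V : Type*} [Fintype V] {E : V → V → Prop} (hacyc : Acyclic E)
    {S : Set V} {z u v : V} (hzu : Relation.ReflTransGen E z u) :
    ∀ (n : ℕ) (p : List V),
      {x | x ∈ p ∧ IsCollider E p x ∧ ¬ ∃ d, Relation.ReflTransGen E x d ∧ d ∈ S}.ncard ≤ n →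
      p.Chain' (Adjacent E) → p.Nodup → p.head? = some u → p.getLast? = some v →
      (∀ x ∈ p, ¬ IsCollider E p x → x ∉ S) →
      (∀ x ∈ p, IsCollider E p x →
        (∃ d, Relation.ReflTransGen E x d ∧ d ∈ S) ∨ Relation.ReflTransGen E x z) →
      DConn E S u v := by
  intro n
  induction n with
  | zero =>
    intro p hcard hch hnd hh hl hnon hcol
    refine ⟨p, ⟨hch, hnd, hh, hl⟩, ⟨fun x hx hc => ?_, hnon⟩⟩
    by_contra hno
    have hne : {x | x ∈ p ∧ IsCollider E p x ∧
        ¬ ∃ d, Relation.ReflTransGen E x d ∧ d ∈ S}.Nonempty := ⟨x, hx, hc, hno⟩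
    have := (Set.ncard_pos (Set.toFinite _)).2 hne
    omega
  | succ n ih =>
    intro p hcard hch hnd hh hl hnon hcol
    by_cases hbad : ∃ c ∈ p, IsCollider E p c ∧ ¬ ∃ d, Relation.ReflTransGen E c d ∧ d ∈ S
    case neg =>
      refine ⟨p, ⟨hch, hnd, hh, hl⟩, ⟨fun x hx hc => ?_, hnon⟩⟩
      by_contra hno
      exact hbad ⟨x, hx, hc, hno⟩
    case pos =>
    obtain ⟨c, hcp, hccol, hcS⟩ := hbad
    have hcz : Relation.ReflTransGen E c z := (hcol c hcp hccol).resolve_left hcS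
    obtain ⟨q, hqch, hqh, hql⟩ := rtg_exists_path (hcz.trans hzu)
    obtain ⟨l1, l2, hp⟩ := List.append_of_mem hcp
    have hndp : (l1 ++ c :: l2).Nodup := hp ▸ hnd
    have hsegnd : (c :: l2).Nodup := by
      rw [List.nodup_append] at hndp; exact hndp.2.1
    have hsegch : (c :: l2).Chain' (Adjacent E) := hch.suffix ⟨l1, hp.symm⟩
    have hseglast : (c :: l2).getLast? = some v := by
      have h0 := hl; rw [hp, List.getLast?_append_cons] at h0; exact h0
    have hq' : q = c :: q.tail := List.eq_cons_of_mem_head? (by rw [hqh]; rfl)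
    have hcq : c ∈ q := by rw [hq']; exact List.mem_cons_self
    obtain ⟨q1, t, q2, hq, htseg, hq2seg⟩ :=
      find_last (Q := fun x => x ∈ c :: l2) ⟨c, hcq, List.mem_cons_self⟩
    have hqnd : q.Nodup := chain'_nodup hacyc hqch
    have htq2suf : (t :: q2) <:+ q := ⟨q1, hq.symm⟩
    have htq2ch : (t :: q2).Chain' E := hqch.suffix htq2suf
    have htq2nd : (t :: q2).Nodup := List.Nodup.sublist htq2suf.sublist hqnd
    have htq2last : (t :: q2).getLast? = some u := by
      have h0 := hql; rw [hq, List.getLast?_append_cons] at h0; exact h0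
    have hdesc : ∀ x ∈ t :: q2, Relation.ReflTransGen E c x := by
      intro x hx
      have hc2 := hqch
      rw [hq'] at hc2
      exact chain'_cons_rtg hc2 (by rw [← hq']; exact htq2suf.subset hx)
    have hAnotS : ∀ x ∈ t :: q2, x ∉ S := fun x hx hxS => hcS ⟨x, hdesc x hx, hxS⟩
    obtain ⟨s1, s2, hseg⟩ := List.append_of_mem htseg
    have hsegnd2 : (s1 ++ t :: s2).Nodup := hseg ▸ hsegnd
    have ht_s2 : t ∉ s2 := (nodup_split_not_mem hsegnd2).2
    have hs2nd : s2.Nodup := by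
      rw [List.nodup_append] at hsegnd2
      exact (List.nodup_cons.1 hsegnd2.2.1).2
    have hs2sub : ∀ x ∈ s2, x ∈ c :: l2 := fun x hx => by
      rw [hseg]; exact List.mem_append_right _ (List.mem_cons_of_mem _ hx)
    have hs2subp : ∀ x ∈ s2, x ∈ p := fun x hx => by
      rw [hp]; exact List.mem_append_right _ (hs2sub x hx)
    have hts2last : (t :: s2).getLast? = some v := by
      have h0 := hseglast; rw [hseg, List.getLast?_append_cons] at h0; exact h0
    have hts2ch : (t :: s2).Chain' (Adjacent E) := hsegch.suffix ⟨s1, hseg.symm⟩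
    obtain ⟨A, hA⟩ : ∃ A : List V, A = (t :: q2).reverse := ⟨_, rfl⟩
    obtain ⟨w, hw⟩ : ∃ w : List V, w = A ++ s2 := ⟨_, rfl⟩
    have hAne : A ≠ [] := by rw [hA]; simp
    have hAlast : A.getLast? = some t := by rw [hA, List.getLast?_reverse]; rfl
    have hwh : w.head? = some u := by
      rw [hw, List.head?_append_of_ne_nil _ hAne, hA, List.head?_reverse]; exact htq2last
    have hwl : w.getLast? = some v := by
      cases s2 with
      | nil =>
        rw [hw, List.append_nil, hAlast]
        simpa using hts2last
      | cons y ys =>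
        rw [hw, List.getLast?_append_cons]
        have h0 := hts2last
        rw [List.getLast?_cons_cons] at h0
        exact h0
    have hAnd : A.Nodup := by rw [hA]; exact List.nodup_reverse.2 htq2nd
    have hdisj : List.Disjoint A s2 := by
      intro x hxA hxs2
      rw [hA, List.mem_reverse] at hxA
      rcases List.mem_cons.1 hxA with h1 | h1
      · exact ht_s2 (h1 ▸ hxs2)
      · exact hq2seg x h1 (hs2sub x hxs2)
    have hwnd : w.Nodup := by
      rw [hw, List.nodup_append]; exact ⟨hAnd, hs2nd, fun a ha b hb hab => hdisj ha (hab ▸ hb)⟩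
    have hwch : w.Chain' (Adjacent E) := by
      rw [hw]
      refine List.IsChain.append ?_ hts2ch.tail ?_
      · rw [hA, List.isChain_reverse]
        exact List.IsChain.imp (fun a b hab => Or.inr hab) htq2ch
      · intro x hx y hy
        rw [hAlast] at hx
        simp only [Option.mem_def, Option.some.injEq] at hx
        have had := (List.isChain_cons.1 hts2ch).1 y hy
        rw [← hx]
        exact had
    have hAnocol : ∀ x ∈ A, ¬ IsCollider E w x := by
      intro x hxA hcolx
      obtain ⟨A1, A2, hA12⟩ := List.append_of_mem hxA
      have hwdec : w = A1 ++ x :: (A2 ++ s2) := by rw [hw, hA12]; simp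
      obtain ⟨a, b, hal, hbh, hax, hbx⟩ := (collider_iff_decomp hwnd hwdec).1 hcolx
      obtain ⟨A1', hA1'⟩ := exists_concat_of_getLast? hal
      have hAeq : A = A1' ++ a :: x :: A2 := by rw [hA12, hA1']; simp
      have h2 := congrArg List.reverse hAeq
      rw [hA, List.reverse_reverse] at h2
      have hrev : t :: q2 = A2.reverse ++ x :: a :: A1'.reverse := by rw [h2]; simp
      have hinf : [x, a] <:+: t :: q2 := ⟨A2.reverse, A1'.reverse, by rw [hrev]; simp⟩
      have hxa : E x a := List.isChain_pair.1 (htq2ch.infix hinf)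
      exact hacyc x ((Relation.TransGen.single hxa).tail hax)
    have htrans : ∀ x ∈ s2, (IsCollider E w x ↔ IsCollider E p x) := by
      intro x hx
      obtain ⟨m1, m2, hm⟩ := List.append_of_mem hx
      have hwdec : w = (A ++ m1) ++ x :: m2 := by rw [hw, hm]; simp
      have hpdec : p = (l1 ++ s1 ++ t :: m1) ++ x :: m2 := by rw [hp, hseg, hm]; simp
      rw [collider_iff_decomp hwnd hwdec, collider_iff_decomp hnd hpdec]
      have hlasteq : (A ++ m1).getLast? = (l1 ++ s1 ++ t :: m1).getLast? := by
        cases m1 with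
        | nil =>
          rw [List.append_nil, hAlast, List.getLast?_append_cons]
          rfl
        | cons y ys =>
          rw [List.getLast?_append_cons, List.getLast?_append_cons,
            List.getLast?_cons_cons]
      rw [hlasteq]
    have hmemw : ∀ x ∈ w, x ∈ A ∨ x ∈ s2 := by
      intro x hx; rw [hw] at hx; exact List.mem_append.1 hx
    have hsub : {x | x ∈ w ∧ IsCollider E w x ∧ ¬ ∃ d, Relation.ReflTransGen E x d ∧ d ∈ S} ⊆
        {x | x ∈ p ∧ IsCollider E p x ∧ ¬ ∃ d, Relation.ReflTransGen E x d ∧ d ∈ S} := by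
      rintro x ⟨hxw, hxcol, hxS⟩
      rcases hmemw x hxw with h1 | h1
      · exact absurd hxcol (hAnocol x h1)
      · exact ⟨hs2subp x h1, (htrans x h1).1 hxcol, hxS⟩
    have hcnot : c ∉ {x | x ∈ w ∧ IsCollider E w x ∧
        ¬ ∃ d, Relation.ReflTransGen E x d ∧ d ∈ S} := by
      rintro ⟨hcw, hccolw, -⟩
      rcases hmemw c hcw with h1 | h1
      · exact hAnocol c h1 hccolw
      · have hcl2 : c ∈ l2 := by
          cases s1 with
          | nil =>
            have h3 : c = t ∧ l2 = s2 := by simpa using hseg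
            rw [h3.2]; exact h1
          | cons y s1' =>
            have h3 : c = y ∧ l2 = s1' ++ t :: s2 := by simpa using hseg
            rw [h3.2]; exact List.mem_append_right _ (List.mem_cons_of_mem _ h1)
        exact (List.nodup_cons.1 hsegnd).1 hcl2
    have hss : {x | x ∈ w ∧ IsCollider E w x ∧ ¬ ∃ d, Relation.ReflTransGen E x d ∧ d ∈ S} ⊂
        {x | x ∈ p ∧ IsCollider E p x ∧ ¬ ∃ d, Relation.ReflTransGen E x d ∧ d ∈ S} :=
      (Set.ssubset_iff_of_subset hsub).2 ⟨c, ⟨hcp, hccol, hcS⟩, hcnot⟩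
    have hcard' : {x | x ∈ w ∧ IsCollider E w x ∧
        ¬ ∃ d, Relation.ReflTransGen E x d ∧ d ∈ S}.ncard ≤ n := by
      have hlt := Set.ncard_lt_ncard hss (Set.toFinite _)
      omega
    refine ih w hcard' hwch hwnd hwh hwl ?_ ?_
    · intro x hxw hncx
      rcases hmemw x hxw with h1 | h1
      · refine hAnotS x ?_
        rw [hA, List.mem_reverse] at h1; exact h1
      · exact hnon x (hs2subp x h1) (fun hcp2 => hncx ((htrans x h1).2 hcp2))
    · intro x hxw hcx
      rcases hmemw x hxw with h1 | h1
      · exact absurd hcx (hAnocol x h1)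
      · exact hcol x (hs2subp x h1) ((htrans x h1).1 hcx)

lemma opened_not_desc {V : Type*} [Fintype V] {E : V → V → Prop} (hacyc : Acyclic E)
    {S : Set V} {u v z : V}
    (hsep : DSep E S u v) (hconn : DConn E (S ∪ {z}) u v) :
    ¬ Relation.ReflTransGen E z u := by
  intro hzu
  obtain ⟨p, ⟨hch, hnd, hh, hl⟩, hcolA, hnonA⟩ := hconn
  refine hsep (main_aux hacyc hzu _ p le_rfl hch hnd hh hl ?_ ?_)
  · intro x hx hnc hS
    exact hnonA x hx hnc (Or.inl hS)
  · intro x hx hc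
    obtain ⟨d, hd1, hd2⟩ := hcolA x hx hc
    rcases hd2 with hd2 | hd2
    · exact Or.inl ⟨d, hd1, hd2⟩
    · exact Or.inr (by rwa [Set.mem_singleton_iff.1 hd2] at hd1)

/-- if `u ⫫ v ∣ S` but `u ⫫̸ v ∣ S ∪ {z}`, then neither `u` nor `v`
belongs to `Des[z]`. -/
theorem endpoints_not_descendants_of_opened_collider {V : Type*} [Fintype V]
    (E : V → V → Prop) (hacyc : Acyclic E)
    (S : Set V) (u v z : V) (hu : u ∉ S ∪ {z}) (hv : v ∉ S ∪ {z})
    (hsep : DSep E S u v) (hconn : DConn E (S ∪ {z}) u v) :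
    ¬ ReflTransGen E z u ∧ ¬ ReflTransGen E z v := by
  constructor
  · exact opened_not_desc hacyc hsep hconn
  · exact opened_not_desc hacyc (fun h => hsep (DConn.symm' h)) (DConn.symm' hconn)
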